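/- Let S be a nonempty set, f : S → ℝ a nonnegative function, and θ₀ ∈ S a point with f(θ₀) ≤ f(θ) for all θ ∈ S. Let N ≥ 1 be an integer and σ̄² > 0. Define g(θ, v) = N·log(π·v) + (N·σ̄² + f(θ))/v for θ ∈ S and v > 0. Then for every θ ∈ S and every v > 0 one has g(θ, v) ≥ g(θ₀, σ̄² + f(θ₀)/N), with equality if and only if f(θ) = f(θ₀) and v = σ̄² + f(θ₀)/N. -/

import Mathlib

/-- pseudo-true parameter and pseudo-true noise variance minimize the
expected negative log-likelihood `g θ v = N·log(π·v) + (N·σ̄² + f θ)/v`. -/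
theorem stmt_0 {S : Type*} [Nonempty S] (f : S → ℝ) (hf : ∀ θ, 0 ≤ f θ)
    (θ₀ : S) (hθ₀ : ∀ θ, f θ₀ ≤ f θ)
    (N : ℕ) (hN : 1 ≤ N) (σbar2 : ℝ) (hσ : 0 < σbar2)
    (g : S → ℝ → ℝ)
    (hg : ∀ θ v, g θ v = (N : ℝ) * Real.log (Real.pi * v) + ((N : ℝ) * σbar2 + f θ) / v) :
    ∀ (θ : S) (v : ℝ), 0 < v →
      g θ₀ (σbar2 + f θ₀ / N) ≤ g θ v ∧
      (g θ v = g θ₀ (σbar2 + f θ₀ / N) ↔ f θ = f θ₀ ∧ v = σbar2 + f θ₀ / N) := by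
  intro θ v hv
  have hNpos : (0:ℝ) < (N:ℝ) := by exact_mod_cast Nat.lt_of_lt_of_le Nat.zero_lt_one hN
  have hNne : (N:ℝ) ≠ 0 := ne_of_gt hNpos
  set v₀ : ℝ := σbar2 + f θ₀ / N with hv₀def
  have hv₀ : 0 < v₀ := add_pos_of_pos_of_nonneg hσ (div_nonneg (hf θ₀) (le_of_lt hNpos))
  have hπ : (0:ℝ) < Real.pi := Real.pi_pos
  -- identity for the difference
  have hlog1 : Real.log (Real.pi * v) = Real.log Real.pi + Real.log v :=
    Real.log_mul (ne_of_gt hπ) (ne_of_gt hv)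
  have hlog2 : Real.log (Real.pi * v₀) = Real.log Real.pi + Real.log v₀ :=
    Real.log_mul (ne_of_gt hπ) (ne_of_gt hv₀)
  have hNv₀ : (N:ℝ) * σbar2 + f θ₀ = (N:ℝ) * v₀ := by
    rw [hv₀def]; field_simp
  have hD : g θ v - g θ₀ v₀ =
      (N:ℝ) * (Real.log v - Real.log v₀ + v₀ / v - 1) + (f θ - f θ₀) / v := by
    rw [hg, hg, hlog1, hlog2, hNv₀]
    have : ((N:ℝ) * v₀) / v₀ = (N:ℝ) := by field_simp
    rw [this]
    field_simp
    linear_combination hNv₀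
  -- first term nonneg
  have hA : 0 ≤ Real.log v - Real.log v₀ + v₀ / v - 1 := by
    have h := Real.log_le_sub_one_of_pos (div_pos hv₀ hv)
    rw [Real.log_div (ne_of_gt hv₀) (ne_of_gt hv)] at h
    linarith
  -- strictness when v ≠ v₀
  have hAstrict : v ≠ v₀ → 0 < Real.log v - Real.log v₀ + v₀ / v - 1 := by
    intro hne
    have hne' : v₀ / v ≠ 1 := by
      intro h; exact hne ((div_eq_one_iff_eq (ne_of_gt hv)).mp h).symm
    have h := Real.log_lt_sub_one_of_pos (div_pos hv₀ hv) hne'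
    rw [Real.log_div (ne_of_gt hv₀) (ne_of_gt hv)] at h
    linarith
  have hB : 0 ≤ (f θ - f θ₀) / v := div_nonneg (by linarith [hθ₀ θ]) (le_of_lt hv)
  have hle : g θ₀ v₀ ≤ g θ v := by nlinarith [mul_nonneg (le_of_lt hNpos) hA]
  refine ⟨hle, ?_, ?_⟩
  · intro heq
    have hD0 : (N:ℝ) * (Real.log v - Real.log v₀ + v₀ / v - 1) + (f θ - f θ₀) / v = 0 := by
      rw [← hD, heq]; ring
    have hvv : v = v₀ := by
      by_contra hne
      have := hAstrict hne
      nlinarith [mul_pos hNpos this]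
    have hA0 : Real.log v - Real.log v₀ + v₀ / v - 1 = 0 := by
      rw [hvv]; rw [div_self (ne_of_gt hv₀)]; ring
    have : (f θ - f θ₀) / v = 0 := by nlinarith
    have : f θ - f θ₀ = 0 := by
      field_simp at this; simpa using this
    exact ⟨by linarith, hvv⟩
  · rintro ⟨h1, h2⟩
    rw [hg, hg, h1, h2]
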